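/- Let G be an abelian group that is p-torsion (every element is killed by a power of p), and suppose the subgroups G[p^i] = {g ∈ G : p^i g = 0} are finite for all i while G itself is infinite. Then there exists an injective group homomorphism from the Prüfer group ℚ_p/ℤ_p into G. -/

import Mathlib

/-- The copy of `ℤ_p` inside `ℚ_p`, as an additive subgroup. -/
noncomputable def padicIntSubgroup (p : ℕ) [Fact p.Prime] : AddSubgroup ℚ_[p] :=
  AddMonoidHom.range ((PadicInt.Coe.ringHom : ℤ_[p] →+* ℚ_[p]).toAddMonoidHom)

/-- The Prüfer `p`-group `ℚ_p/ℤ_p`. -/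
noncomputable abbrev PruferGroup (p : ℕ) [Fact p.Prime] :=
  ℚ_[p] ⧸ padicIntSubgroup p

namespace PruferAux

variable {G : Type} [AddCommGroup G] {p : ℕ} [Fact p.Prime]

/-- A decreasing sequence of nonempty subsets of a finite set has nonempty intersection. -/
lemma iInter_nonempty {α : Type} {S : Set α} (hS : S.Finite) (A : ℕ → Set α)
    (hsub : ∀ m, A m ⊆ S) (hne : ∀ m, (A m).Nonempty)
    (hdec : ∀ m, A (m + 1) ⊆ A m) : (⋂ m, A m).Nonempty := by
  have hanti : Antitone A := antitone_nat_of_succ_le fun n => hdec n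
  choose g hg using hne
  haveI := hS.to_subtype
  obtain ⟨y, hy⟩ := Finite.exists_infinite_fiber (fun m => (⟨g m, hsub m (hg m)⟩ : S))
  have hyI : ((fun m => (⟨g m, hsub m (hg m)⟩ : S)) ⁻¹' {y}).Infinite :=
    Set.infinite_coe_iff.mp hy
  refine ⟨y.1, Set.mem_iInter.2 fun m => ?_⟩
  obtain ⟨k, hk, hmk⟩ := hyI.exists_gt m
  have hgk : g k = y.1 := congrArg Subtype.val (Set.mem_singleton_iff.mp hk)
  exact hgk ▸ hanti hmk.le (hg k)

lemma exists_exact_order (htor : ∀ g : G, ∃ i : ℕ, p ^ i • g = 0)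
    (hfin : ∀ i : ℕ, {g : G | p ^ i • g = 0}.Finite) (hinf : Infinite G) (n : ℕ) :
    ∃ g : G, addOrderOf g = p ^ n := by
  have hp : p.Prime := Fact.out
  obtain ⟨g, hg⟩ := ((hfin n).infinite_compl).nonempty
  have hg' : ¬ p ^ n • g = 0 := hg
  obtain ⟨i, hi⟩ := htor g
  have hdvd : addOrderOf g ∣ p ^ i := addOrderOf_dvd_of_nsmul_eq_zero hi
  obtain ⟨m, _, hordg⟩ := (Nat.dvd_prime_pow hp).mp hdvd
  have hnm : n < m := by
    by_contra h
    push_neg at h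
    exact hg' (addOrderOf_dvd_iff_nsmul_eq_zero.mp (hordg ▸ pow_dvd_pow p h))
  refine ⟨p ^ (m - n) • g, ?_⟩
  rw [addOrderOf_nsmul_of_dvd (pow_ne_zero _ hp.ne_zero)
      (by rw [hordg]; exact pow_dvd_pow p (Nat.sub_le m n)), hordg,
    Nat.pow_div (Nat.sub_le m n) hp.pos, Nat.sub_sub_self hnm.le]

lemma exists_chain (htor : ∀ g : G, ∃ i : ℕ, p ^ i • g = 0)
    (hfin : ∀ i : ℕ, {g : G | p ^ i • g = 0}.Finite) (hinf : Infinite G) :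
    ∃ P : ℕ → G, (∀ n, addOrderOf (P n) = p ^ n) ∧ ∀ n, p • P (n + 1) = P n := by
  classical
  have hp : p.Prime := Fact.out
  set R : ℕ → Set G :=
    fun n => {g | ∀ m : ℕ, ∃ h : G, addOrderOf h = p ^ (n + m) ∧ p ^ m • h = g} with hRdef
  have hordR : ∀ n, ∀ g ∈ R n, addOrderOf g = p ^ n := by
    intro n g hg
    obtain ⟨h, h1, h2⟩ := hg 0
    simp only [pow_zero, one_smul] at h2
    rw [← h2]
    simpa using h1
  have hRne : ∀ n, (R n).Nonempty := by
    intro n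
    have key := iInter_nonempty (hfin n)
      (fun m => {g : G | ∃ h : G, addOrderOf h = p ^ (n + m) ∧ p ^ m • h = g}) ?_ ?_ ?_
    · obtain ⟨g, hg⟩ := key
      rw [Set.mem_iInter] at hg
      exact ⟨g, fun m => hg m⟩
    · rintro m g ⟨h, h1, rfl⟩
      show p ^ n • p ^ m • h = 0
      rw [smul_smul, ← pow_add, ← h1]
      exact addOrderOf_nsmul_eq_zero h
    · intro m
      obtain ⟨h, hh⟩ := exists_exact_order htor hfin hinf (n + m)
      exact ⟨p ^ m • h, h, hh, rfl⟩
    · rintro m g ⟨h, h1, rfl⟩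
      refine ⟨p • h, ?_, ?_⟩
      · rw [addOrderOf_nsmul_of_dvd hp.ne_zero (by rw [h1]; exact dvd_pow_self p (by omega)),
          h1, show n + (m + 1) = (n + m) + 1 by omega, pow_succ,
          Nat.mul_div_cancel _ hp.pos]
      · rw [smul_smul, ← pow_succ]
  have hstep : ∀ n, ∀ g ∈ R n, ∃ h, h ∈ R (n + 1) ∧ p • h = g := by
    intro n g hg
    have key := iInter_nonempty (hfin (n + 1))
      (fun m => {h : G | p • h = g ∧
        ∃ k : G, addOrderOf k = p ^ (n + 1 + m) ∧ p ^ m • k = h}) ?_ ?_ ?_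
    · obtain ⟨h, hh⟩ := key
      rw [Set.mem_iInter] at hh
      exact ⟨h, fun m => (hh m).2, (hh 0).1⟩
    · rintro m h ⟨-, k, h1, rfl⟩
      show p ^ (n + 1) • p ^ m • k = 0
      rw [smul_smul, ← pow_add, ← h1]
      exact addOrderOf_nsmul_eq_zero k
    · intro m
      obtain ⟨k, hk1, hk2⟩ := hg (m + 1)
      refine ⟨p ^ m • k, ?_, k, by rw [hk1]; congr 1; omega, rfl⟩
      rw [smul_smul, ← pow_succ']
      exact hk2
    · rintro m h ⟨hph, k, h1, rfl⟩
      refine ⟨hph, p • k, ?_, ?_⟩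
      · rw [addOrderOf_nsmul_of_dvd hp.ne_zero (by rw [h1]; exact dvd_pow_self p (by omega)),
          h1, show n + 1 + (m + 1) = (n + 1 + m) + 1 by omega, pow_succ,
          Nat.mul_div_cancel _ hp.pos]
      · rw [smul_smul, ← pow_succ]
  choose next hnextR hnextP using hstep
  obtain ⟨g0, hg0⟩ := hRne 0
  let Q : ∀ n : ℕ, {g : G // g ∈ R n} := fun n =>
    Nat.rec ⟨g0, hg0⟩ (fun n ih => ⟨next n ih.1 ih.2, hnextR n ih.1 ih.2⟩) n
  exact ⟨fun n => (Q n).1, fun n => hordR n _ (Q n).2,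
    fun n => hnextP n (Q n).1 (Q n).2⟩

variable (P : ℕ → G) (hP : ∀ n, p ^ n • P n = 0)

/-- The homomorphism `ZMod (p^n) →+ G` sending `1` to `P n`. -/
noncomputable def chi (n : ℕ) : ZMod (p ^ n) →+ G :=
  ZMod.lift (p ^ n) ⟨zmultiplesHom G (P n), by
    show ((p ^ n : ℕ) : ℤ) • P n = 0
    rw [natCast_zsmul]
    exact hP n⟩

set_option linter.unusedSectionVars false in
lemma chi_natCast (n m : ℕ) : chi P hP n ((m : ℕ) : ZMod (p ^ n)) = m • P n := by
  have h : ((m : ℕ) : ZMod (p ^ n)) = ((m : ℤ) : ZMod (p ^ n)) := by push_cast; ring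
  rw [h, chi, ZMod.lift_coe]
  show (m : ℤ) • P n = m • P n
  rw [natCast_zsmul]

lemma zmod_hom_ext {N : ℕ} (f g : ZMod N →+ G) (h : f 1 = g 1) : f = g := by
  ext a
  obtain ⟨k, rfl⟩ := ZMod.intCast_surjective a
  have hk : ((k : ℤ) : ZMod N) = k • (1 : ZMod N) := by
    rw [zsmul_eq_mul, mul_one]
  rw [hk, map_zsmul, map_zsmul, h]

lemma chi_step (hcomp : ∀ n, p • P (n + 1) = P n) (n : ℕ) (a : ZMod (p ^ (n + 1))) :
    chi P hP (n + 1) ((p : ZMod (p ^ (n + 1))) * a) =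
      chi P hP n (ZMod.castHom (pow_dvd_pow p n.le_succ) (ZMod (p ^ n)) a) := by
  have key : (chi P hP (n + 1)).comp (AddMonoidHom.mulLeft (p : ZMod (p ^ (n + 1)))) =
      (chi P hP n).comp (ZMod.castHom (pow_dvd_pow p n.le_succ) (ZMod (p ^ n))).toAddMonoidHom := by
    apply zmod_hom_ext
    simp only [AddMonoidHom.comp_apply, AddMonoidHom.coe_mulLeft, mul_one,
      RingHom.toAddMonoidHom_eq_coe, AddMonoidHom.coe_coe, map_one]
    have h1 : chi P hP (n + 1) ((p : ZMod (p ^ (n + 1)))) = p • P (n + 1) := by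
      exact chi_natCast P hP (n + 1) p
    have h2 : chi P hP n (1 : ZMod (p ^ n)) = P n := by
      have := chi_natCast P hP n 1
      simpa using this
    rw [h1, h2, hcomp]
  exact DFunLike.congr_fun key a

end PruferAux

/-- If `G` is an infinite abelian `p`-torsion group whose `pⁱ`-torsion
subgroups are all finite, then the Prüfer group `ℚ_p/ℤ_p` embeds into `G`. -/
theorem prufer_embeds_of_infinite_p_torsion
    {G : Type} [AddCommGroup G] (p : ℕ) [Fact p.Prime]
    (htor : ∀ g : G, ∃ i : ℕ, p ^ i • g = 0)
    (hfin : ∀ i : ℕ, {g : G | p ^ i • g = 0}.Finite)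
    (hinf : Infinite G) :
    ∃ f : PruferGroup p →+ G, Function.Injective f := by
  classical
  have hp : p.Prime := Fact.out
  obtain ⟨P, hord, hcomp⟩ := PruferAux.exists_chain htor hfin hinf
  have hP : ∀ n, p ^ n • P n = 0 := fun n => by
    rw [← hord n]; exact addOrderOf_nsmul_eq_zero (P n)
  -- membership in the subgroup
  have hmemSub : ∀ x : ℚ_[p], x ∈ padicIntSubgroup p ↔ ‖x‖ ≤ 1 := by
    intro x
    constructor
    · rintro ⟨z, rfl⟩; exact z.2
    · intro h; exact ⟨⟨x, h⟩, rfl⟩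
  -- norm bound facts
  have hnormp : ‖(p : ℚ_[p])‖ = (p : ℝ)⁻¹ := Padic.norm_p
  have mono : ∀ (n : ℕ) (x : ℚ_[p]), ‖(p : ℚ_[p]) ^ n * x‖ ≤ 1 →
      ‖(p : ℚ_[p]) ^ (n + 1) * x‖ ≤ 1 := by
    intro n x h
    have he : (p : ℚ_[p]) ^ (n + 1) * x = (p : ℚ_[p]) * ((p : ℚ_[p]) ^ n * x) := by ring
    rw [he, norm_mul, hnormp]
    have hp1 : (p : ℝ)⁻¹ ≤ 1 := by
      rw [inv_le_one_iff₀]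
      right
      exact_mod_cast hp.one_lt.le
    calc (p : ℝ)⁻¹ * ‖(p : ℚ_[p]) ^ n * x‖ ≤ 1 * 1 := by
          apply mul_le_mul hp1 h (norm_nonneg _) zero_le_one
      _ = 1 := one_mul 1
  have monoLe : ∀ (n m : ℕ) (x : ℚ_[p]), n ≤ m → ‖(p : ℚ_[p]) ^ n * x‖ ≤ 1 →
      ‖(p : ℚ_[p]) ^ m * x‖ ≤ 1 := by
    intro n m x hnm h
    induction m, hnm using Nat.le_induction with
    | base => exact h
    | succ m hm ih => exact mono m x ih
  have hmem : ∀ x : ℚ_[p], ∃ n : ℕ, ‖(p : ℚ_[p]) ^ n * x‖ ≤ 1 := by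
    intro x
    obtain ⟨n, hn⟩ := pow_unbounded_of_one_lt (‖x‖) (by exact_mod_cast hp.one_lt : (1:ℝ) < p)
    refine ⟨n, ?_⟩
    rw [norm_mul, norm_pow, hnormp]
    rw [inv_pow]
    have hpR : (0:ℝ) < p := by exact_mod_cast hp.pos
    rw [inv_mul_le_iff₀ (pow_pos hpR n), mul_one]
    exact hn.le
  choose ν hν using hmem
  -- the underlying function
  set F : ℚ_[p] → G := fun x =>
    PruferAux.chi P hP (ν x) (PadicInt.toZModPow (ν x) ⟨_, hν x⟩) with hFdef
  -- one-step compatibility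
  have step : ∀ (n : ℕ) (x : ℚ_[p]) (h : ‖(p : ℚ_[p]) ^ n * x‖ ≤ 1)
      (h' : ‖(p : ℚ_[p]) ^ (n + 1) * x‖ ≤ 1),
      PruferAux.chi P hP (n + 1) (PadicInt.toZModPow (n + 1) ⟨_, h'⟩) =
        PruferAux.chi P hP n (PadicInt.toZModPow n ⟨_, h⟩) := by
    intro n x h h'
    have hy : @Eq ℤ_[p] (⟨(p : ℚ_[p]) ^ (n + 1) * x, h'⟩ : ℤ_[p])
        ((p : ℤ_[p]) * (show ℤ_[p] from ⟨(p : ℚ_[p]) ^ n * x, h⟩)) := by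
      apply Subtype.ext
      rw [PadicInt.coe_mul]
      push_cast
      ring
    rw [hy, map_mul, map_natCast, PruferAux.chi_step P hP hcomp n]
    congr 1
    exact RingHom.congr_fun (PadicInt.zmod_cast_comp_toZModPow n (n + 1) n.le_succ) _
  -- independence of the level
  have indep : ∀ (n : ℕ) (x : ℚ_[p]) (h : ‖(p : ℚ_[p]) ^ n * x‖ ≤ 1) (m : ℕ) (hnm : n ≤ m)
      (h' : ‖(p : ℚ_[p]) ^ m * x‖ ≤ 1),
      PruferAux.chi P hP m (PadicInt.toZModPow m ⟨_, h'⟩) =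
        PruferAux.chi P hP n (PadicInt.toZModPow n ⟨_, h⟩) := by
    intro n x h m hnm
    induction m, hnm using Nat.le_induction with
    | base => intro h'; rfl
    | succ m hm ih =>
      intro h'
      have hm' : ‖(p : ℚ_[p]) ^ m * x‖ ≤ 1 := monoLe n m x hm h
      rw [step m x hm' h', ih hm']
  have key : ∀ (n : ℕ) (x : ℚ_[p]) (h : ‖(p : ℚ_[p]) ^ n * x‖ ≤ 1),
      F x = PruferAux.chi P hP n (PadicInt.toZModPow n ⟨_, h⟩) := by
    intro n x h
    have hb : ‖(p : ℚ_[p]) ^ max n (ν x) * x‖ ≤ 1 := monoLe n _ x (le_max_left _ _) h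
    have e1 := indep (ν x) x (hν x) (max n (ν x)) (le_max_right _ _) hb
    have e2 := indep n x h (max n (ν x)) (le_max_left _ _) hb
    have e0 : F x = PruferAux.chi P hP (ν x)
        (PadicInt.toZModPow (ν x) ⟨(p : ℚ_[p]) ^ ν x * x, hν x⟩) := rfl
    rw [e0, ← e1, e2]
  -- additivity
  have hadd : ∀ x y : ℚ_[p], F (x + y) = F x + F y := by
    intro x y
    set N := max (ν x) (ν y) with hN
    have bx : ‖(p : ℚ_[p]) ^ N * x‖ ≤ 1 := monoLe (ν x) N x (le_max_left _ _) (hν x)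
    have by' : ‖(p : ℚ_[p]) ^ N * y‖ ≤ 1 := monoLe (ν y) N y (le_max_right _ _) (hν y)
    have bxy : ‖(p : ℚ_[p]) ^ N * (x + y)‖ ≤ 1 := by
      have he : (p : ℚ_[p]) ^ N * (x + y) = (p : ℚ_[p]) ^ N * x + (p : ℚ_[p]) ^ N * y := by ring
      rw [he]
      exact le_trans (Padic.nonarchimedean _ _) (max_le bx by')
    rw [key N x bx, key N y by', key N (x + y) bxy]
    have hsum : PadicInt.toZModPow N (⟨(p : ℚ_[p]) ^ N * (x + y), bxy⟩ : ℤ_[p]) =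
        PadicInt.toZModPow N ⟨(p : ℚ_[p]) ^ N * x, bx⟩ +
          PadicInt.toZModPow N ⟨(p : ℚ_[p]) ^ N * y, by'⟩ := by
      refine Eq.trans ?_ (map_add _ _ _)
      congr 1
      apply Subtype.ext
      show (p : ℚ_[p]) ^ N * (x + y) = (p : ℚ_[p]) ^ N * x + (p : ℚ_[p]) ^ N * y
      ring
    rw [hsum, map_add]
  set φ : ℚ_[p] →+ G := AddMonoidHom.mk' F hadd with hφdef
  -- kernel contains ℤ_p
  have hker0 : ∀ x : ℚ_[p], ‖x‖ ≤ 1 → F x = 0 := by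
    intro x hx
    have b0 : ‖(p : ℚ_[p]) ^ 0 * x‖ ≤ 1 := by simpa using hx
    have b1 : ‖(p : ℚ_[p]) ^ 1 * x‖ ≤ 1 := mono 0 x b0
    rw [key 1 x b1]
    have hy : @Eq ℤ_[p] (⟨(p : ℚ_[p]) ^ 1 * x, b1⟩ : ℤ_[p]) ((p : ℤ_[p]) * (show ℤ_[p] from ⟨x, hx⟩)) := by
      apply Subtype.ext
      rw [PadicInt.coe_mul]
      push_cast
      ring
    rw [hy, map_mul, map_natCast]
    haveI : NeZero (p ^ 1) := ⟨pow_ne_zero 1 hp.ne_zero⟩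
    have hz : ((p : ℕ) : ZMod (p ^ 1)) = 0 := by
      rw [ZMod.natCast_eq_zero_iff]
      exact (pow_one p).symm ▸ dvd_rfl
    rw [hz, zero_mul, map_zero]
  -- elements of norm > 1 are not in the kernel
  have hker1 : ∀ x : ℚ_[p], F x = 0 → ‖x‖ ≤ 1 := by
    intro x
    contrapose!
    intro hx
    have hx0 : x ≠ 0 := by
      rintro rfl
      norm_num at hx
    have hval : ‖x‖ = (p : ℝ) ^ (-x.valuation) := Padic.norm_eq_zpow_neg_valuation hx0
    have hvneg : 0 < -x.valuation := by
      by_contra h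
      push_neg at h
      have : ‖x‖ ≤ 1 := by
        rw [hval]
        calc ((p : ℝ)) ^ (-x.valuation) ≤ (p : ℝ) ^ (0 : ℤ) :=
          zpow_le_zpow_right₀ (by exact_mod_cast hp.one_lt.le) h
        _ = 1 := zpow_zero _
      linarith
    set k : ℕ := (-x.valuation).toNat with hk
    have hk1 : 1 ≤ k := by omega
    have hkz : (k : ℤ) = -x.valuation := Int.toNat_of_nonneg hvneg.le
    have hb : ‖(p : ℚ_[p]) ^ k * x‖ = 1 := by
      rw [norm_mul, norm_pow, hnormp, hval, inv_pow, ← zpow_natCast (p : ℝ), hkz]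
      have hpR : (0:ℝ) < p := by exact_mod_cast hp.pos
      rw [← zpow_neg, ← zpow_add₀ hpR.ne']
      simp
    set y : ℤ_[p] := ⟨(p : ℚ_[p]) ^ k * x, hb.le⟩ with hy
    have hyu : IsUnit y := PadicInt.isUnit_iff.mpr hb
    have hau : IsUnit (PadicInt.toZModPow k y) := hyu.map _
    obtain ⟨U, hU⟩ := hau
    haveI : NeZero (p ^ k) := ⟨pow_ne_zero k hp.ne_zero⟩
    rw [key k x hb.le]
    have ha : ((PadicInt.toZModPow k y).val : ZMod (p ^ k)) = PadicInt.toZModPow k y :=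
      ZMod.natCast_rightInverse _
    rw [← ha, PruferAux.chi_natCast]
    intro h0
    have hdvd : p ^ k ∣ (PadicInt.toZModPow k y).val := by
      have hd := addOrderOf_dvd_iff_nsmul_eq_zero.mpr h0
      rwa [hord k] at hd
    have hcop : Nat.Coprime (PadicInt.toZModPow k y).val (p ^ k) := by
      rw [← hU]
      exact ZMod.val_coe_unit_coprime U
    have : p ^ k ∣ 1 := by
      rw [← hcop]
      exact Nat.dvd_gcd hdvd dvd_rfl
    have hpk : p ^ k = 1 := Nat.dvd_one.mp this
    have : 1 < p ^ k := Nat.one_lt_pow (by omega) hp.one_lt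
    omega
  -- assemble the quotient map
  refine ⟨QuotientAddGroup.lift (padicIntSubgroup p) φ
    (fun x hx => AddMonoidHom.mem_ker.mpr (hker0 x ((hmemSub x).mp hx))), ?_⟩
  rw [injective_iff_map_eq_zero]
  intro q
  induction q using QuotientAddGroup.induction_on with
  | H x =>
    intro h
    rw [QuotientAddGroup.lift_mk'] at h
    exact (QuotientAddGroup.eq_zero_iff x).mpr ((hmemSub x).mpr (hker1 x h))
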